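/- Let 2 ≤ q < ∞ and let X be a Banach space which is uniformly convex of power type q with constant δ ∈ (0,1]. Let (Ω̃,Ã,μ̃) be a probability space and let 𝒜, ℬ ⊆ Ã be sub-σ-algebras. Define the operator T on the Bochner space L_q(Ω̃,𝒜,μ̃;X) by Tf = 𝔼[ 𝔼[f | ℬ] | 𝒜 ], the iterated conditional expectation. Then ‖I − T‖ ≤ 2 − ε as an operator on L_q(Ω̃,𝒜,μ̃;X), where ε := (2δ/(1+2δ))·(1/q). -/

import Mathlib

open MeasureTheory

/-- A normed space is uniformly convex of power type `q` with constant `δ` if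
`‖(x+y)/2‖^q + δ ‖(x-y)/2‖^q ≤ (‖x‖^q + ‖y‖^q)/2` for all `x, y`. -/
def UniformlyConvexPow (X : Type*) [NormedAddCommGroup X] [NormedSpace ℝ X]
    (q δ : ℝ) : Prop :=
  ∀ x y : X, ‖(2 : ℝ)⁻¹ • (x + y)‖ ^ q + δ * ‖(2 : ℝ)⁻¹ • (x - y)‖ ^ q ≤
    (‖x‖ ^ q + ‖y‖ ^ q) / 2

open scoped ENNReal NNReal

section AuxLemmas
variable {Ω : Type*} {m m0 : MeasurableSpace Ω} {μ : Measure Ω}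
variable {X : Type*} [NormedAddCommGroup X] [NormedSpace ℝ X] [CompleteSpace X]

lemma my_condexp_clm (hm : m ≤ m0) [SigmaFinite (μ.trim hm)] (T : X →L[ℝ] ℝ)
    {φ : Ω → X} (hφ : Integrable φ μ) :
    (fun ω => T ((μ[φ|m]) ω)) =ᵐ[μ] μ[fun ω => T (φ ω)|m] := by
  refine ae_eq_condExp_of_forall_setIntegral_eq hm (T.integrable_comp hφ) ?_ ?_ ?_
  · intro s _ _
    exact (T.integrable_comp integrable_condExp).integrableOn
  · intro s hs _
    rw [T.integral_comp_comm integrable_condExp.integrableOn,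
        T.integral_comp_comm hφ.integrableOn, setIntegral_condExp hm hφ hs]
  · exact (T.continuous.comp_stronglyMeasurable stronglyMeasurable_condExp).aestronglyMeasurable

lemma my_norm_condexp_le (hm : m ≤ m0) [SigmaFinite (μ.trim hm)]
    {φ : Ω → X} (hφ : Integrable φ μ) :
    ∀ᵐ ω ∂μ, ‖(μ[φ|m]) ω‖ ≤ (μ[fun ω' => ‖φ ω'‖|m]) ω := by
  obtain ⟨c, hc_count, hc_sub⟩ :=
    (stronglyMeasurable_condExp (m := m) (f := φ) (μ := μ)).isSeparable_range
  choose T hT1 hT2 using fun x : X => exists_dual_vector'' ℝ x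
  have hd : ∀ᵐ ω ∂μ, ∀ d ∈ c, T d ((μ[φ|m]) ω) ≤ (μ[fun ω' => ‖φ ω'‖|m]) ω := by
    rw [ae_ball_iff hc_count]
    intro d _
    have h1 := my_condexp_clm hm (T d) hφ
    have h2 : μ[fun ω' => T d (φ ω')|m] ≤ᵐ[μ] μ[fun ω' => ‖φ ω'‖|m] := by
      refine condExp_mono ((T d).integrable_comp hφ) hφ.norm
        (Filter.Eventually.of_forall fun ω => ?_)
      calc T d (φ ω) ≤ ‖T d (φ ω)‖ := le_abs_self _
        _ ≤ ‖T d‖ * ‖φ ω‖ := (T d).le_opNorm _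
        _ ≤ 1 * ‖φ ω‖ := mul_le_mul_of_nonneg_right (hT1 d) (norm_nonneg _)
        _ = ‖φ ω‖ := one_mul _
    filter_upwards [h1, h2] with ω e1 e2
    rw [e1]; exact e2
  filter_upwards [hd] with ω hω
  have hmem : (μ[φ|m]) ω ∈ closure c := hc_sub (Set.mem_range_self ω)
  refine le_of_forall_pos_le_add fun ε hε => ?_
  obtain ⟨d, hdc, hdist⟩ := Metric.mem_closure_iff.1 hmem (ε / 2) (by linarith)
  have h3 : ‖(μ[φ|m]) ω‖ ≤ ‖d‖ + ε / 2 := by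
    have := norm_sub_norm_le ((μ[φ|m]) ω) d
    rw [dist_eq_norm] at hdist
    linarith
  have h4 : ‖d‖ ≤ T d ((μ[φ|m]) ω) + ε / 2 := by
    have h5 : T d d - T d ((μ[φ|m]) ω) ≤ ε / 2 := by
      calc T d d - T d ((μ[φ|m]) ω) = T d (d - (μ[φ|m]) ω) := by rw [map_sub]
        _ ≤ ‖T d (d - (μ[φ|m]) ω)‖ := le_abs_self _
        _ ≤ ‖T d‖ * ‖d - (μ[φ|m]) ω‖ := (T d).le_opNorm _
        _ ≤ 1 * ‖d - (μ[φ|m]) ω‖ := mul_le_mul_of_nonneg_right (hT1 d) (norm_nonneg _)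
        _ ≤ ε / 2 := by
            rw [one_mul, ← dist_eq_norm, dist_comm]; exact hdist.le
    have : T d d = ‖d‖ := by simpa using hT2 d
    linarith
  have h6 := hω d hdc
  linarith

end AuxLemmas

lemma my_tangent_le {q : ℝ} (hq : 2 ≤ q) {r t : ℝ} (hr : 0 ≤ r) (ht : 0 ≤ t) :
    r ^ q + q * r ^ (q - 1) * (t - r) ≤ t ^ q := by
  rcases eq_or_lt_of_le hr with h | h
  · rw [← h, Real.zero_rpow (by linarith : q ≠ 0), Real.zero_rpow (by linarith : q - 1 ≠ 0)]
    simpa using Real.rpow_nonneg ht q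
  · have hs : -1 ≤ t / r - 1 := by
      have : 0 ≤ t / r := div_nonneg ht h.le
      linarith
    have hB := one_add_mul_self_le_rpow_one_add hs (by linarith : 1 ≤ q)
    have h1 : (1 : ℝ) + (t / r - 1) = t / r := by ring
    rw [h1, Real.div_rpow ht h.le] at hB
    have hrq : (0:ℝ) < r ^ q := Real.rpow_pos_of_pos h q
    have h2 : (1 + q * (t / r - 1)) * r ^ q ≤ t ^ q / r ^ q * r ^ q :=
      mul_le_mul_of_nonneg_right hB hrq.le
    rw [div_mul_cancel₀ _ hrq.ne'] at h2
    have hr1 : r ^ (q - 1) * r = r ^ q := by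
      rw [← Real.rpow_add_one h.ne' (q - 1)]; ring_nf
    have h4 : t / r * r ^ q = t * r ^ (q - 1) := by
      rw [← hr1]; field_simp
    nlinarith [h2, h4, hr1]

section AuxLemmas2
variable {Ω : Type*} {m m0 : MeasurableSpace Ω} {μ : Measure Ω}
variable {X : Type*} [NormedAddCommGroup X] [NormedSpace ℝ X] [CompleteSpace X]

lemma my_rpow_condexp (hm : m ≤ m0) [IsFiniteMeasure μ] {q : ℝ} (hq : 2 ≤ q)
    {N : Ω → ℝ} (hN : Integrable N μ) (hN0 : ∀ ω, 0 ≤ N ω)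
    (hNq : Integrable (fun ω => N ω ^ q) μ) :
    ∀ᵐ ω ∂μ, (μ[N|m]) ω ^ q ≤ (μ[fun ω' => N ω' ^ q|m]) ω := by
  have key : ∀ᵐ ω ∂μ, ∀ r : ℚ, 0 ≤ (r : ℝ) →
      (r : ℝ) ^ q + q * (r : ℝ) ^ (q - 1) * ((μ[N|m]) ω - r) ≤ (μ[fun ω' => N ω' ^ q|m]) ω := by
    rw [ae_all_iff]
    intro r
    by_cases hr : 0 ≤ (r : ℝ)
    swap
    · filter_upwards with ω h; exact absurd h hr
    -- affine function
    set b : ℝ := q * (r : ℝ) ^ (q - 1) with hb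
    set c : ℝ := (r : ℝ) ^ q - b * r with hc
    have hint : Integrable (fun ω => c + b * N ω) μ := (integrable_const c).add (hN.const_mul b)
    have hmono : μ[fun ω => c + b * N ω|m] ≤ᵐ[μ] μ[fun ω' => N ω' ^ q|m] := by
      refine condExp_mono hint hNq (Filter.Eventually.of_forall fun ω => ?_)
      have := my_tangent_le hq hr (hN0 ω) (t := N ω)
      simp only [hc, hb]
      linarith
    have haff : μ[fun ω => c + b * N ω|m] =ᵐ[μ] fun ω => c + b * (μ[N|m]) ω := by
      have h1 : (fun ω => c + b * N ω) = (fun _ => c) + b • N := by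
        funext ω; simp [Pi.smul_apply, smul_eq_mul]
      rw [h1]
      refine (condExp_add (m := m) (integrable_const c) (hN.smul b)).trans ?_
      have h2 := condExp_smul (μ := μ) (m := m) b N
      have h3 := condExp_const hm c (μ := μ)
      filter_upwards [h2] with ω hω
      simp only [Pi.add_apply, h3, Pi.smul_apply, smul_eq_mul] at *
      rw [hω]
    filter_upwards [hmono, haff] with ω h1 h2
    intro _
    rw [h2] at h1
    simp only [hc, hb] at h1 ⊢
    nlinarith [h1]
  have hnn : ∀ᵐ ω ∂μ, 0 ≤ (μ[N|m]) ω :=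
    condExp_nonneg (Filter.Eventually.of_forall hN0)
  filter_upwards [key, hnn] with ω hall hs
  set s : ℝ := (μ[N|m]) ω with hsdef
  set R : ℝ := (μ[fun ω' => N ω' ^ q|m]) ω with hRdef
  rcases eq_or_lt_of_le hs with h0 | h0
  · have := hall 0 (by norm_num)
    rw [← h0]
    rw [Rat.cast_zero, Real.zero_rpow (by linarith : q ≠ 0),
      Real.zero_rpow (by linarith : q - 1 ≠ 0)] at this
    rw [Real.zero_rpow (by linarith : q ≠ 0)]
    linarith
  · -- s > 0 : approximate by rationals
    by_contra hcon
    push_neg at hcon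
    set ε : ℝ := s ^ q - R with hε
    have hεpos : 0 < ε := by simp only [hε]; linarith
    have hu : ContinuousAt (fun x : ℝ => x ^ q + q * x ^ (q - 1) * (s - x)) s := by
      have c1 : ContinuousAt (fun x : ℝ => x ^ q) s :=
        Real.continuousAt_rpow_const s q (Or.inl h0.ne')
      have c2 : ContinuousAt (fun x : ℝ => x ^ (q - 1)) s :=
        Real.continuousAt_rpow_const s (q - 1) (Or.inl h0.ne')
      exact c1.add (((continuousAt_const.mul c2).mul (continuousAt_const.sub continuousAt_id)))
    rw [Metric.continuousAt_iff] at hu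
    obtain ⟨δ, hδpos, hδ⟩ := hu ε hεpos
    obtain ⟨r, hr1, hr2⟩ := exists_rat_btwn (show max (s - δ) 0 < s by
      simp only [max_lt_iff]; constructor <;> linarith)
    have hrpos : (0:ℝ) < r := lt_of_le_of_lt (le_max_right _ _) hr1
    have hrdist : dist (r : ℝ) s < δ := by
      rw [Real.dist_eq, abs_lt]
      constructor
      · have := le_max_left (s - δ) 0; linarith [lt_of_le_of_lt this hr1]
      · linarith
    have := hδ hrdist
    rw [Real.dist_eq, abs_lt] at this
    have hval : (r : ℝ) ^ q + q * (r : ℝ) ^ (q - 1) * (s - r) > s ^ q - ε := by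
      have hss : s ^ q + q * s ^ (q - 1) * (s - s) = s ^ q := by ring
      rw [hss] at this
      linarith [this.1]
    have := hall r hrpos.le
    simp only [hε] at hval
    linarith

lemma my_eLpNorm_condexp_le (hm : m ≤ m0) [IsProbabilityMeasure μ] {q : ℝ} (hq : 2 ≤ q)
    {φ : Ω → X} (hφ : MemLp φ (ENNReal.ofReal q) μ) :
    eLpNorm (μ[φ|m]) (ENNReal.ofReal q) μ ≤ eLpNorm φ (ENNReal.ofReal q) μ := by
  have hq0 : (0:ℝ) < q := by linarith
  set p : ℝ≥0∞ := ENNReal.ofReal q with hp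
  have hp0 : p ≠ 0 := by simp [hp, ENNReal.ofReal_eq_zero]; linarith
  have hpt : p ≠ ∞ := ENNReal.ofReal_ne_top
  have hptr : p.toReal = q := ENNReal.toReal_ofReal hq0.le
  have hφi : Integrable φ μ := hφ.integrable (by
    rw [hp, ← ENNReal.ofReal_one]; exact ENNReal.ofReal_le_ofReal (by linarith))
  have hNq : Integrable (fun ω => ‖φ ω‖ ^ q) μ := by
    have := hφ.integrable_norm_rpow hp0 hpt
    rwa [hptr] at this
  have hpt1 := my_norm_condexp_le hm hφi
  have hpt2 := my_rpow_condexp hm hq hφi.norm (fun ω => norm_nonneg _) hNq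
  have hnn : ∀ᵐ ω ∂μ, 0 ≤ (μ[fun ω' => ‖φ ω'‖|m]) ω :=
    condExp_nonneg (Filter.Eventually.of_forall fun ω => norm_nonneg _)
  have hkey : ∀ᵐ ω ∂μ, ‖(μ[φ|m]) ω‖ ^ q ≤ (μ[fun ω' => ‖φ ω'‖ ^ q|m]) ω := by
    filter_upwards [hpt1, hpt2, hnn] with ω h1 h2 h3
    calc ‖(μ[φ|m]) ω‖ ^ q ≤ ((μ[fun ω' => ‖φ ω'‖|m]) ω) ^ q :=
          Real.rpow_le_rpow (norm_nonneg _) h1 hq0.le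
      _ ≤ (μ[fun ω' => ‖φ ω'‖ ^ q|m]) ω := h2
  -- pass to lintegrals
  have lhs_eq : ∀ (ψ : Ω → X), eLpNorm ψ p μ
      = (∫⁻ ω, ENNReal.ofReal (‖ψ ω‖ ^ q) ∂μ) ^ (1 / q) := by
    intro ψ
    rw [eLpNorm_eq_lintegral_rpow_enorm_toReal hp0 hpt, hptr]
    congr 1
    refine lintegral_congr fun ω => ?_
    rw [← ENNReal.ofReal_rpow_of_nonneg (norm_nonneg _) hq0.le, ofReal_norm]
  rw [lhs_eq, lhs_eq]
  refine ENNReal.rpow_le_rpow ?_ (by positivity)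
  calc ∫⁻ ω, ENNReal.ofReal (‖(μ[φ|m]) ω‖ ^ q) ∂μ
      ≤ ∫⁻ ω, ENNReal.ofReal ((μ[fun ω' => ‖φ ω'‖ ^ q|m]) ω) ∂μ := by
        refine lintegral_mono_ae ?_
        filter_upwards [hkey] with ω h
        exact ENNReal.ofReal_le_ofReal h
    _ = ENNReal.ofReal (∫ ω, (μ[fun ω' => ‖φ ω'‖ ^ q|m]) ω ∂μ) :=
        (ofReal_integral_eq_lintegral_ofReal integrable_condExp
          (condExp_nonneg (Filter.Eventually.of_forall fun ω =>
            Real.rpow_nonneg (norm_nonneg _) q))).symm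
    _ = ENNReal.ofReal (∫ ω, ‖φ ω‖ ^ q ∂μ) := by rw [integral_condExp hm]
    _ = ∫⁻ ω, ENNReal.ofReal (‖φ ω‖ ^ q) ∂μ :=
        ofReal_integral_eq_lintegral_ofReal hNq
          (Filter.Eventually.of_forall fun ω => Real.rpow_nonneg (norm_nonneg _) q)

lemma my_memLp_condexp (hm : m ≤ m0) [IsProbabilityMeasure μ] {q : ℝ} (hq : 2 ≤ q)
    {φ : Ω → X} (hφ : MemLp φ (ENNReal.ofReal q) μ) :
    MemLp (μ[φ|m]) (ENNReal.ofReal q) μ :=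
  ⟨(stronglyMeasurable_condExp.mono hm).aestronglyMeasurable,
    lt_of_le_of_lt (my_eLpNorm_condexp_le hm hq hφ) hφ.2⟩

end AuxLemmas2

lemma my_numeric {q δ a b e n : ℝ} (hq : 2 ≤ q) (hδ0 : 0 < δ) (hδ1 : δ ≤ 1)
    (ha0 : 0 ≤ a) (hb0 : 0 ≤ b) (he0 : 0 ≤ e) (hn0 : 0 ≤ n)
    (hconv4 : b ^ q + 2 * δ * e ^ q ≤ a ^ q)
    (hne : n ≤ 2 * e) (hnab : n ≤ a + b) (hba : b ≤ a) :
    n ≤ (2 - 2 * δ / (1 + 2 * δ) * (1 / q)) * a := by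
  have hq0 : (0:ℝ) < q := by linarith
  set ε : ℝ := 2 * δ / (1 + 2 * δ) * (1 / q) with hεdef
  have hqe : q * ε = 2 * δ / (1 + 2 * δ) := by
    rw [hεdef]; field_simp
  have hd12 : (0:ℝ) < 1 + 2 * δ := by linarith
  have hε0 : 0 < ε := by rw [hεdef]; positivity
  have hε1 : ε < 1 := by
    have h2d : 2 * δ / (1 + 2 * δ) < 1 := by rw [div_lt_one hd12]; linarith
    nlinarith [h2d, hqe, hε0, hq0, mul_le_mul_of_nonneg_right hq hε0.le]
  by_contra hcon
  push_neg at hcon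
  rcases eq_or_lt_of_le ha0 with h0 | h0
  · have hb0' : b = 0 := le_antisymm (by linarith [hba]) hb0
    have : n ≤ 0 := by linarith [hnab]
    nlinarith
  · have hblow : (1 - ε) * a < b := by linarith [hnab, hcon]
    have helow : (1 - ε / 2) * a < e := by linarith [hne, hcon]
    have haq : 0 < a ^ q := Real.rpow_pos_of_pos h0 q
    have hbgt : ((1 - ε) * a) ^ q < b ^ q :=
      Real.rpow_lt_rpow (mul_nonneg (by linarith) ha0) hblow hq0
    have hegt : ((1 - ε / 2) * a) ^ q < e ^ q :=
      Real.rpow_lt_rpow (mul_nonneg (by linarith) ha0) helow hq0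
    rw [Real.mul_rpow (by linarith) ha0] at hbgt
    rw [Real.mul_rpow (by linarith) ha0] at hegt
    have hB1 : 1 + q * (-ε) ≤ (1 + -ε) ^ q :=
      one_add_mul_self_le_rpow_one_add (by linarith) (by linarith)
    have hB2 : 1 + q * (-(ε/2)) ≤ (1 + -(ε/2)) ^ q :=
      one_add_mul_self_le_rpow_one_add (by linarith) (by linarith)
    rw [show (1:ℝ) + -ε = 1 - ε by ring] at hB1
    rw [show (1:ℝ) + -(ε/2) = 1 - ε/2 by ring] at hB2
    have hb_gt : (1 - q * ε) * a ^ q < b ^ q :=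
      lt_of_le_of_lt (by linarith [mul_le_mul_of_nonneg_right hB1 haq.le]) hbgt
    have he_gt : (1 - q * (ε/2)) * a ^ q < e ^ q :=
      lt_of_le_of_lt (by linarith [mul_le_mul_of_nonneg_right hB2 haq.le]) hegt
    have hprod : 2 * δ * ((1 - q * (ε/2)) * a ^ q) < 2 * δ * e ^ q :=
      mul_lt_mul_of_pos_left he_gt (by linarith)
    have hfinal : a ^ q * (2 * δ - q * ε * (1 + δ)) < 0 := by
      nlinarith [hconv4, hb_gt, hprod]
    have hneg : 2 * δ - q * ε * (1 + δ) < 0 := by nlinarith [hfinal, haq]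
    have hs : q * ε * (1 + 2 * δ) = 2 * δ := by
      rw [hqe]; field_simp
    linarith [hs, hneg, mul_pos (mul_pos hq0 hε0) hδ0]


/-- If `X` is uniformly convex of power type `q` with constant `δ ∈ (0,1]`,
`(Ω̃, μ̃)` is a probability space with sub-σ-algebras `𝒜, ℬ`, and
`T f = 𝔼[𝔼[f|ℬ]|𝒜]` is the iterated conditional expectation, then
`‖I - T‖ ≤ 2 - ε` on the `𝒜`-measurable part of `L_q(Ω̃; X)`, i.e.
`‖f - T f‖_{L_q} ≤ (2 - ε) ‖f‖_{L_q}` with `ε = (2δ/(1+2δ)) · (1/q)`. -/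
theorem stmt9 (X : Type*) [NormedAddCommGroup X] [NormedSpace ℝ X] [CompleteSpace X]
    (q δ : ℝ) (hq : 2 ≤ q) (hδ : δ ∈ Set.Ioc (0 : ℝ) 1)
    (hX : UniformlyConvexPow X q δ)
    (Ω : Type*) [m0 : MeasurableSpace Ω] (μ : Measure Ω) [IsProbabilityMeasure μ]
    (mA mB : MeasurableSpace Ω) (hmA : mA ≤ m0) (hmB : mB ≤ m0)
    (f : Ω → X) (hf : MemLp f (ENNReal.ofReal q) μ)
    (hfA : AEStronglyMeasurable[mA] f μ) :
    eLpNorm (f - μ[μ[f|mB]|mA]) (ENNReal.ofReal q) μ ≤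
      ENNReal.ofReal (2 - 2 * δ / (1 + 2 * δ) * (1 / q)) *
        eLpNorm f (ENNReal.ofReal q) μ := by
  obtain ⟨hδ0, hδ1⟩ := hδ
  have hq0 : (0:ℝ) < q := by linarith
  set ε : ℝ := 2 * δ / (1 + 2 * δ) * (1 / q) with hεdef
  set p : ℝ≥0∞ := ENNReal.ofReal q with hp
  have hp0 : p ≠ 0 := by simp only [hp, ne_eq, ENNReal.ofReal_eq_zero, not_le]; linarith
  have hpt : p ≠ ∞ := ENNReal.ofReal_ne_top
  have hptr : p.toReal = q := ENNReal.toReal_ofReal hq0.le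
  have hp1 : (1:ℝ≥0∞) ≤ p := by
    rw [hp, ← ENNReal.ofReal_one]; exact ENNReal.ofReal_le_ofReal (by linarith)
  have hfi : Integrable f μ := hf.integrable hp1
  set g : Ω → X := μ[f|mB] with hgdef
  have hg : MemLp g p μ := my_memLp_condexp hmB hq hf
  have hgi : Integrable g μ := hg.integrable hp1
  set h : Ω → X := μ[g|mA] with hhdef
  have hh : MemLp h p μ := my_memLp_condexp hmA hq hg
  have hfg : MemLp (f - g) p μ := hf.sub hg
  have hfh : MemLp (f - h) p μ := hf.sub hh
  set φp : Ω → X := (2:ℝ)⁻¹ • (f + g) with hφp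
  set φm : Ω → X := (2:ℝ)⁻¹ • (f - g) with hφm
  have hφpmem : MemLp φp p μ := (hf.add hg).const_smul _
  have hφmmem : MemLp φm p μ := hfg.const_smul _
  set a : ℝ := (eLpNorm f p μ).toReal with ha_def
  set b : ℝ := (eLpNorm g p μ).toReal with hb_def
  set cc : ℝ := (eLpNorm φp p μ).toReal with hcc_def
  set e : ℝ := (eLpNorm φm p μ).toReal with he_def
  set n : ℝ := (eLpNorm (f - h) p μ).toReal with hn_def
  have ha0 : 0 ≤ a := ENNReal.toReal_nonneg
  have hb0 : 0 ≤ b := ENNReal.toReal_nonneg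
  have he0 : 0 ≤ e := ENNReal.toReal_nonneg
  have hn0 : 0 ≤ n := ENNReal.toReal_nonneg
  clear_value a b cc e n
  -- toReal ^ q = integral of ‖·‖^q
  have key : ∀ (ψ : Ω → X), MemLp ψ p μ →
      ((eLpNorm ψ p μ).toReal) ^ q = ∫ ω, ‖ψ ω‖ ^ q ∂μ := by
    intro ψ hψ
    have hint : 0 ≤ ∫ ω, ‖ψ ω‖ ^ p.toReal ∂μ :=
      integral_nonneg fun ω => Real.rpow_nonneg (norm_nonneg _) _
    rw [hψ.eLpNorm_eq_integral_rpow_norm hp0 hpt,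
      ENNReal.toReal_ofReal (Real.rpow_nonneg hint _), hptr] at *
    exact Real.rpow_inv_rpow hint (by linarith)
  -- integrability of the q-powers
  have hInt : ∀ (ψ : Ω → X), MemLp ψ p μ → Integrable (fun ω => ‖ψ ω‖ ^ q) μ := by
    intro ψ hψ
    have := hψ.integrable_norm_rpow hp0 hpt
    rwa [hptr] at this
  -- integrated uniform convexity
  have hconv : (∫ ω, ‖φp ω‖ ^ q ∂μ) + δ * ∫ ω, ‖φm ω‖ ^ q ∂μ ≤
      ((∫ ω, ‖f ω‖ ^ q ∂μ) + ∫ ω, ‖g ω‖ ^ q ∂μ) / 2 := by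
    have hmono : (∫ ω, (‖φp ω‖ ^ q + δ * ‖φm ω‖ ^ q) ∂μ) ≤
        ∫ ω, (‖f ω‖ ^ q + ‖g ω‖ ^ q) / 2 ∂μ :=
      integral_mono ((hInt φp hφpmem).add ((hInt φm hφmmem).const_mul δ))
        (((hInt f hf).add (hInt g hg)).div_const 2) (fun ω => hX (f ω) (g ω))
    rwa [integral_add (hInt φp hφpmem) ((hInt φm hφmmem).const_mul δ), integral_const_mul,
      integral_div, integral_add (hInt f hf) (hInt g hg)] at hmono
  have hkc : cc ^ q + δ * e ^ q ≤ (a ^ q + b ^ q) / 2 := by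
    rw [ha_def, hb_def, hcc_def, he_def, key _ hφpmem, key _ hφmmem, key _ hf, key _ hg]
    exact hconv
  -- b ≤ cc
  have hgc : g =ᵐ[μ] μ[φp|mB] := by
    have h1 := condExp_smul (μ := μ) (m := mB) ((2:ℝ)⁻¹) (f + g)
    have h2 := condExp_add (μ := μ) (m := mB) hfi hgi
    have h3 : μ[g|mB] =ᵐ[μ] g := condExp_of_aestronglyMeasurable' hmB
      stronglyMeasurable_condExp.aestronglyMeasurable integrable_condExp
    filter_upwards [h1, h2, h3] with ω e1 e2 e3
    rw [hφp, e1]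
    simp only [Pi.smul_apply, e2, Pi.add_apply, ← hgdef, e3]
    rw [← two_smul ℝ, smul_smul]
    norm_num
  have hbc : b ≤ cc := by
    rw [hb_def, hcc_def]
    refine ENNReal.toReal_mono hφpmem.2.ne ?_
    calc eLpNorm g p μ = eLpNorm (μ[φp|mB]) p μ := eLpNorm_congr_ae hgc
      _ ≤ eLpNorm φp p μ := my_eLpNorm_condexp_le hmB hq hφpmem
  -- n ≤ 2 e
  have hfg2 : f - g = (2:ℝ) • φm := by
    funext ω
    rw [hφm]
    simp only [Pi.smul_apply, Pi.sub_apply, smul_smul]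
    rw [show (2:ℝ) * 2⁻¹ = 1 by norm_num, one_smul]
  have hd2e : (eLpNorm (f - g) p μ).toReal = 2 * e := by
    rw [he_def, hfg2, eLpNorm_const_smul]
    simp [ENNReal.smul_def, ENNReal.toReal_mul]
  have hsub : f - h =ᵐ[μ] μ[f - g|mA] := by
    have h1 := condExp_sub (μ := μ) (m := mA) hfi hgi
    have h2 : μ[f|mA] =ᵐ[μ] f := condExp_of_aestronglyMeasurable' hmA hfA hfi
    filter_upwards [h1, h2] with ω e1 e2
    simp only [Pi.sub_apply, e1, e2, ← hhdef]
  have hne : n ≤ 2 * e := by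
    rw [hn_def, ← hd2e]
    refine ENNReal.toReal_mono hfg.2.ne ?_
    calc eLpNorm (f - h) p μ = eLpNorm (μ[f - g|mA]) p μ := eLpNorm_congr_ae hsub
      _ ≤ eLpNorm (f - g) p μ := my_eLpNorm_condexp_le hmA hq hfg
  -- n ≤ a + b
  have hnab : n ≤ a + b := by
    have h1 : eLpNorm (f - h) p μ ≤ eLpNorm f p μ + eLpNorm g p μ :=
      (eLpNorm_sub_le hf.1 hh.1 hp1).trans
        (add_le_add le_rfl (my_eLpNorm_condexp_le hmA hq hg))
    have h2 := ENNReal.toReal_mono (ENNReal.add_ne_top.2 ⟨hf.2.ne, hg.2.ne⟩) h1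
    rw [ENNReal.toReal_add hf.2.ne hg.2.ne] at h2
    rw [hn_def, ha_def, hb_def]
    exact h2
  -- b ≤ a
  have hba : b ≤ a := by
    rw [hb_def, ha_def]
    exact ENNReal.toReal_mono hf.2.ne (my_eLpNorm_condexp_le hmB hq hf)
  -- main convexity consequence
  have hconv4 : b ^ q + 2 * δ * e ^ q ≤ a ^ q := by
    have hbq : b ^ q ≤ cc ^ q := Real.rpow_le_rpow hb0 hbc hq0.le
    linarith
  have hmain : n ≤ (2 - ε) * a := by
    rw [hεdef]
    exact my_numeric hq hδ0 hδ1 ha0 hb0 he0 hn0 hconv4 hne hnab hba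
  -- conclude in ℝ≥0∞
  have hfin1 : eLpNorm (f - h) p μ ≠ ∞ := hfh.2.ne
  have hfin2 : eLpNorm f p μ ≠ ∞ := hf.2.ne
  calc eLpNorm (f - h) p μ = ENNReal.ofReal n := by
        rw [hn_def, ENNReal.ofReal_toReal hfin1]
    _ ≤ ENNReal.ofReal ((2 - ε) * a) := ENNReal.ofReal_le_ofReal hmain
    _ = ENNReal.ofReal (2 - ε) * ENNReal.ofReal a := ENNReal.ofReal_mul (by
          have hd12 : (0:ℝ) < 1 + 2 * δ := by linarith
          have : 0 ≤ 2 * δ / (1 + 2 * δ) := by positivity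
          have h2d : 2 * δ / (1 + 2 * δ) ≤ 1 := by rw [div_le_one hd12]; linarith
          have h1q : 1 / q ≤ 1 := by rw [div_le_one hq0]; linarith
          have : ε ≤ 1 := by
            rw [hεdef]
            calc 2 * δ / (1 + 2 * δ) * (1 / q) ≤ 1 * 1 :=
              mul_le_mul h2d h1q (by positivity) zero_le_one
            _ = 1 := by norm_num
          linarith)
    _ = ENNReal.ofReal (2 - ε) * eLpNorm f p μ := by rw [ha_def, ENNReal.ofReal_toReal hfin2]
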